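/- Let m, n : ℕ and suppose that N does not divide m − n as integers, i.e. ¬ ((N : ℤ) ∣ (m : ℤ) - (n : ℤ)). If x ∈ (⨂[ℂ]^m V) ⊗[ℂ] (⨂[ℂ]^n (Module.Dual ℂ V)) satisfies (TensorProduct.map (U^{⊗m}) (Ū^{⊗n})) x = x for every U ∈ SU(N), then x = 0. (There are no SU(N)-singlets on a mixed space with m quarks and n antiquarks unless N divides m − n.) -/

import Mathlib

open scoped TensorProduct

set_option synthInstance.maxHeartbeats 1000000
set_option maxHeartbeats 1000000

/-- The `m`-fold tensor power `U^{⊗m}` of the linear map given by the matrix `U`. -/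
noncomputable def tpowMap (N m : ℕ) (U : Matrix (Fin N) (Fin N) ℂ) :
    (⨂[ℂ] _ : Fin m, (Fin N → ℂ)) →ₗ[ℂ] ⨂[ℂ] _ : Fin m, (Fin N → ℂ) :=
  PiTensorProduct.map fun _ => Matrix.toLin' U

/-- The `n`-fold tensor power `Ū^{⊗n}` of the contragredient (antifundamental) action of
`U ∈ SU(N)` on the dual space, sending `f` to `f ∘ₗ Matrix.toLin' (U⁻¹)`. -/
noncomputable def dualTpowMap (N n : ℕ) (U : Matrix (Fin N) (Fin N) ℂ) :
    (⨂[ℂ] _ : Fin n, Module.Dual ℂ (Fin N → ℂ)) →ₗ[ℂ]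
      ⨂[ℂ] _ : Fin n, Module.Dual ℂ (Fin N → ℂ) :=
  PiTensorProduct.map fun _ => (Matrix.toLin' U⁻¹).dualMap

lemma pitensor_map_smul_id {m : ℕ} {M : Type*} [AddCommGroup M] [Module ℂ M] (c : ℂ) :
    (PiTensorProduct.map (fun _ : Fin m => (c • LinearMap.id : M →ₗ[ℂ] M)))
      = c ^ m • LinearMap.id := by
  apply PiTensorProduct.ext
  apply MultilinearMap.ext
  intro v
  simp only [LinearMap.compMultilinearMap_apply, PiTensorProduct.map_tprod,
    LinearMap.smul_apply, LinearMap.id_apply]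
  have := (PiTensorProduct.tprod ℂ (s := fun _ : Fin m => M)).map_smul_univ
    (fun _ => c) v
  simpa [Finset.prod_const] using this

/-- If `N` does not divide `m - n`, there are no `SU(N)` singlets in
`V^{⊗ m} ⊗ (V^*)^{⊗ n}`: any vector fixed by all `U^{⊗m} ⊗ Ū^{⊗n}` vanishes. -/
theorem no_singlets_of_not_dvd (N : ℕ) (hN : 0 < N) (m n : ℕ)
    (hdvd : ¬ ((N : ℤ) ∣ (m : ℤ) - (n : ℤ)))
    (x : (⨂[ℂ] _ : Fin m, (Fin N → ℂ)) ⊗[ℂ] (⨂[ℂ] _ : Fin n, Module.Dual ℂ (Fin N → ℂ)))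
    (hx : ∀ U : Matrix.specialUnitaryGroup (Fin N) ℂ,
      TensorProduct.map (tpowMap N m (U : Matrix (Fin N) (Fin N) ℂ))
        (dualTpowMap N n (U : Matrix (Fin N) (Fin N) ℂ)) x = x) :
    x = 0 := by
  set ζ : ℂ := Complex.exp (2 * Real.pi * Complex.I / N) with hζdef
  have hζ : IsPrimitiveRoot ζ N := Complex.isPrimitiveRoot_exp N hN.ne'
  have hζ0 : ζ ≠ 0 := hζ.ne_zero hN.ne'
  have hnorm : ‖ζ‖ = 1 := Complex.norm_eq_one_of_pow_eq_one hζ.pow_eq_one hN.ne'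
  have hconj : ζ * (starRingEnd ℂ) ζ = 1 := by
    have habs : ‖ζ‖ = 1 := hnorm
    rw [Complex.mul_conj]
    simp [Complex.normSq_eq_norm_sq, habs]
  set U : Matrix (Fin N) (Fin N) ℂ := ζ • 1 with hUdef
  have hUmul : ∀ c d : ℂ, (c • (1 : Matrix (Fin N) (Fin N) ℂ)) * (d • 1) = (c * d) • 1 := by
    intro c d
    rw [Matrix.smul_mul, Matrix.mul_smul, smul_smul, Matrix.one_mul]
  have hU : U ∈ Matrix.specialUnitaryGroup (Fin N) ℂ := by
    rw [Matrix.mem_specialUnitaryGroup_iff]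
    constructor
    · rw [Matrix.mem_unitaryGroup_iff]
      have : star U = (starRingEnd ℂ) ζ • 1 := by
        simp [hUdef, star_smul]
      rw [this, hUdef, hUmul, hconj, one_smul]
    · rw [hUdef, Matrix.det_smul, Matrix.det_one, mul_one]
      simpa using hζ.pow_eq_one
  have hinv : U⁻¹ = ζ⁻¹ • 1 := by
    apply Matrix.inv_eq_right_inv
    rw [hUdef, hUmul, mul_inv_cancel₀ hζ0, one_smul]
  have htoLin : Matrix.toLin' U = ζ • LinearMap.id := by
    rw [hUdef, map_smul, Matrix.toLin'_one]
  have htoLinInv : Matrix.toLin' U⁻¹ = ζ⁻¹ • LinearMap.id := by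
    rw [hinv, map_smul, Matrix.toLin'_one]
  have hdual : (Matrix.toLin' U⁻¹).dualMap = ζ⁻¹ • (LinearMap.id :
      Module.Dual ℂ (Fin N → ℂ) →ₗ[ℂ] Module.Dual ℂ (Fin N → ℂ)) := by
    rw [htoLinInv]
    ext f v
    simp
  have h1 : tpowMap N m U = ζ ^ m • LinearMap.id := by
    rw [tpowMap]
    simp_rw [htoLin]
    exact pitensor_map_smul_id ζ
  have h2 : dualTpowMap N n U = (ζ⁻¹) ^ n • LinearMap.id := by
    rw [dualTpowMap]
    simp_rw [hdual]
    exact pitensor_map_smul_id ζ⁻¹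
  have key := hx ⟨U, hU⟩
  rw [show ((⟨U, hU⟩ : Matrix.specialUnitaryGroup (Fin N) ℂ) : Matrix (Fin N) (Fin N) ℂ) = U
    from rfl, h1, h2, TensorProduct.map_smul_left, TensorProduct.map_smul_right,
    TensorProduct.map_id] at key
  have hscalar : (ζ ^ m * ζ⁻¹ ^ n) ≠ 1 := by
    intro h
    apply hdvd
    rw [← hζ.zpow_eq_one_iff_dvd]
    rw [zpow_sub₀ hζ0]
    simpa [zpow_natCast, ← inv_pow, div_eq_mul_inv] using h
  have hsx : (ζ ^ m * ζ⁻¹ ^ n) • x = x := by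
    simpa [smul_smul] using key
  have h3 : (ζ ^ m * ζ⁻¹ ^ n - 1) • x = 0 := by
    rw [sub_smul (ζ ^ m * ζ⁻¹ ^ n) 1 x, one_smul, hsx, sub_self]
  rcases smul_eq_zero.mp h3 with h | h
  · exact absurd (sub_eq_zero.mp h) hscalar
  · exact h
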